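/- Under statistical QoS constraints with a constant-rate source, the minimum energy per bit for common message transmission satisfies lim_{snr→0⁺} ([(1−δ1)·P(z1 ≥ z2) + (1−δ2)·P(z1 < z2)]·snr)/C_E0(snr) = [(1−δ1)·P(z1 ≥ z2) + (1−δ2)·P(z1 < z2)]·log_e 2 / ((1−δ1)·E[z2·1{z1 ≥ z2}] + (1−δ2)·E[z1·1{z1 < z2}]). -/

import Mathlib

open MeasureTheory ProbabilityTheory Filter Set
open scoped Topology

lemma aux_hasDerivAt (θ δ z : ℝ) :
    HasDerivAt (fun s : ℝ => Real.exp (-θ * Real.logb 2 (1 + (1 - δ) * s * z / (1 + δ * s * z))))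
      (-θ * ((1 - δ) * z) / Real.log 2) 0 := by
  have h1 : HasDerivAt (fun s : ℝ => (1 - δ) * s * z) ((1 - δ) * z) 0 := by
    simpa using (((hasDerivAt_id (0:ℝ)).const_mul (1 - δ)).mul_const z)
  have h2 : HasDerivAt (fun s : ℝ => 1 + δ * s * z) (δ * z) 0 := by
    simpa using ((((hasDerivAt_id (0:ℝ)).const_mul δ).mul_const z).const_add 1)
  have hne : (1 : ℝ) + δ * 0 * z ≠ 0 := by norm_num
  have hu := h1.div h2 hne
  have hv := hu.const_add 1
  have hlogarg : (1:ℝ) + (1 - δ) * 0 * z / (1 + δ * 0 * z) ≠ 0 := by norm_num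
  have hlog := hv.log hlogarg
  have hmul := hlog.const_mul (-θ / Real.log 2)
  have hexp := hmul.exp
  have hfun : (fun s : ℝ => Real.exp (-θ * Real.logb 2 (1 + (1 - δ) * s * z / (1 + δ * s * z))))
      = (fun s : ℝ => Real.exp (-θ / Real.log 2 * Real.log (1 + (1 - δ) * s * z / (1 + δ * s * z)))) := by
    funext s
    rw [Real.logb]
    ring_nf
  rw [hfun]
  convert hexp using 1
  simp only [Pi.div_apply]
  norm_num
  ring

lemma aux_logb_bounds {δ z M s : ℝ} (hδ0 : 0 ≤ δ) (hδ1 : δ < 1) (hz : 0 ≤ z) (hzM : z ≤ M)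
    (hs : 0 < s) :
    0 ≤ Real.logb 2 (1 + (1 - δ) * s * z / (1 + δ * s * z)) ∧
      Real.logb 2 (1 + (1 - δ) * s * z / (1 + δ * s * z)) ≤ s * M / Real.log 2 := by
  have hδz : 0 ≤ δ * s * z := mul_nonneg (mul_nonneg hδ0 hs.le) hz
  have hdenom : (1:ℝ) ≤ 1 + δ * s * z := by linarith
  have hnum : 0 ≤ (1 - δ) * s * z := mul_nonneg (mul_nonneg (by linarith) hs.le) hz
  have ha0 : 0 ≤ (1 - δ) * s * z / (1 + δ * s * z) := div_nonneg hnum (by linarith)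
  have ha1 : (1 - δ) * s * z / (1 + δ * s * z) ≤ s * M := by
    have h1 : (1 - δ) * s * z / (1 + δ * s * z) ≤ (1 - δ) * s * z := div_le_self hnum hdenom
    nlinarith [mul_nonneg hs.le hz, mul_nonneg hs.le (hz.trans hzM)]
  constructor
  · exact Real.logb_nonneg one_lt_two (by linarith)
  · rw [Real.logb, div_le_div_iff_of_pos_right (Real.log_pos one_lt_two)]
    have := Real.log_le_sub_one_of_pos
      (show (0:ℝ) < 1 + (1 - δ) * s * z / (1 + δ * s * z) by linarith)
    linarith

/-- Under statistical QoS constraints with a constant-rate source,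
the minimum energy per bit for common message transmission satisfies
`lim_{snr→0⁺} ([(1−δ1)·P(z1 ≥ z2) + (1−δ2)·P(z1 < z2)]·snr)/C_E0(snr)
  = [(1−δ1)·P(z1 ≥ z2) + (1−δ2)·P(z1 < z2)]·log 2
    / ((1−δ1)·E[z2·1{z1 ≥ z2}] + (1−δ2)·E[z1·1{z1 < z2}])`. -/
theorem minimum_energy_per_bit_common_constant_rate
    {Ω : Type*} [MeasurableSpace Ω] (μ : Measure Ω) [IsProbabilityMeasure μ]
    (z1 z2 : Ω → ℝ) (hz1m : Measurable z1) (hz2m : Measurable z2)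
    (hz1nn : ∀ ω, 0 ≤ z1 ω) (hz2nn : ∀ ω, 0 ≤ z2 ω)
    (M : ℝ) (hz1b : ∀ ω, z1 ω ≤ M) (hz2b : ∀ ω, z2 ω ≤ M)
    (θ δ1 δ2 : ℝ) (hθ : 0 < θ)
    (hδ1 : δ1 ∈ Set.Ico (0 : ℝ) 1) (hδ2 : δ2 ∈ Set.Ico (0 : ℝ) 1)
    (hden : 0 < (1 - δ1) * (∫ ω, (if z2 ω ≤ z1 ω then z2 ω else 0) ∂μ)
      + (1 - δ2) * (∫ ω, (if z1 ω < z2 ω then z1 ω else 0) ∂μ))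
    (R0 : ℝ → Ω → ℝ)
    (hR0 : ∀ snr ω, R0 snr ω =
      (if z2 ω ≤ z1 ω then
        Real.logb 2 (1 + (1 - δ1) * snr * z2 ω / (1 + δ1 * snr * z2 ω)) else 0)
      + (if z1 ω < z2 ω then
        Real.logb 2 (1 + (1 - δ2) * snr * z1 ω / (1 + δ2 * snr * z1 ω)) else 0))
    (CE0 : ℝ → ℝ)
    (hCE0 : ∀ snr, CE0 snr = -(1 / θ) * Real.log (∫ ω, Real.exp (-θ * R0 snr ω) ∂μ)) :
    Filter.Tendsto
      (fun snr => (((1 - δ1) * (μ {ω | z2 ω ≤ z1 ω}).toReal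
        + (1 - δ2) * (μ {ω | z1 ω < z2 ω}).toReal) * snr) / CE0 snr)
      (nhdsWithin 0 (Set.Ioi 0))
      (nhds (((1 - δ1) * (μ {ω | z2 ω ≤ z1 ω}).toReal
          + (1 - δ2) * (μ {ω | z1 ω < z2 ω}).toReal) * Real.log 2 /
        ((1 - δ1) * (∫ ω, (if z2 ω ≤ z1 ω then z2 ω else 0) ∂μ)
          + (1 - δ2) * (∫ ω, (if z1 ω < z2 ω then z1 ω else 0) ∂μ)))) := by
  have hlog2 : (0:ℝ) < Real.log 2 := Real.log_pos one_lt_two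
  set l : Filter ℝ := nhdsWithin 0 (Set.Ioi 0) with hl
  set D : ℝ := (1 - δ1) * (∫ ω, (if z2 ω ≤ z1 ω then z2 ω else 0) ∂μ)
      + (1 - δ2) * (∫ ω, (if z1 ω < z2 ω then z1 ω else 0) ∂μ) with hDdef
  set c : ℝ := (1 - δ1) * (μ {ω | z2 ω ≤ z1 ω}).toReal
      + (1 - δ2) * (μ {ω | z1 ω < z2 ω}).toReal with hcdef
  set g : Ω → ℝ := fun ω =>
    (if z2 ω ≤ z1 ω then (1 - δ1) * z2 ω else (1 - δ2) * z1 ω) / Real.log 2 with hgdef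
  set Fn : ℝ → ℝ := fun s => ∫ ω, Real.exp (-θ * R0 s ω) ∂μ with hFndef
  -- basic facts
  have hspos : ∀ᶠ s in l, (0:ℝ) < s := eventually_mem_nhdsWithin
  -- integrability from boundedness
  have int_of_bdd : ∀ (f : Ω → ℝ) (C : ℝ), Measurable f → (∀ ω, |f ω| ≤ C) → Integrable f μ := by
    intro f C hf hC
    refine ⟨hf.aestronglyMeasurable, HasFiniteIntegral.of_bounded (C := C) (ae_of_all μ ?_)⟩
    simpa [Real.norm_eq_abs] using hC
  -- measurability of R0
  have hlogbm : ∀ (c1 c2 : ℝ) (z : Ω → ℝ), Measurable z →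
      Measurable (fun ω => Real.logb 2 (1 + c1 * z ω / (1 + c2 * z ω))) := by
    intro c1 c2 z hz
    simp only [Real.logb]
    exact (Real.measurable_log.comp (measurable_const.add
      ((hz.const_mul c1).div (measurable_const.add (hz.const_mul c2))))).div_const _
  have hR0m : ∀ s, Measurable (R0 s) := by
    intro s
    have : R0 s = fun ω =>
      (if z2 ω ≤ z1 ω then
        Real.logb 2 (1 + (1 - δ1) * s * z2 ω / (1 + δ1 * s * z2 ω)) else 0)
      + (if z1 ω < z2 ω then
        Real.logb 2 (1 + (1 - δ2) * s * z1 ω / (1 + δ2 * s * z1 ω)) else 0) :=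
      funext (hR0 s)
    rw [this]
    exact (Measurable.ite (measurableSet_le hz2m hz1m)
        (hlogbm ((1 - δ1) * s) (δ1 * s) z2 hz2m) measurable_const).add
      (Measurable.ite (measurableSet_lt hz1m hz2m)
        (hlogbm ((1 - δ2) * s) (δ2 * s) z1 hz1m) measurable_const)
  -- bounds on R0 for s > 0
  have hR0bd : ∀ s, 0 < s → ∀ ω, 0 ≤ R0 s ω ∧ R0 s ω ≤ s * M / Real.log 2 := by
    intro s hs ω
    rw [hR0]
    by_cases h : z2 ω ≤ z1 ω
    · have hb := aux_logb_bounds hδ1.1 hδ1.2 (hz2nn ω) (hz2b ω) hs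
      simp only [if_pos h, if_neg (not_lt.mpr h), add_zero]
      exact hb
    · have hb := aux_logb_bounds hδ2.1 hδ2.2 (hz1nn ω) (hz1b ω) hs
      simp only [if_neg h, if_pos (not_le.mp h), zero_add]
      exact hb
  -- pointwise bound on difference quotients
  have hbd : ∀ s, 0 < s → ∀ ω,
      |(Real.exp (-θ * R0 s ω) - 1) / s| ≤ θ * M / Real.log 2 := by
    intro s hs ω
    obtain ⟨h0, h1⟩ := hR0bd s hs ω
    have hexple : Real.exp (-θ * R0 s ω) ≤ 1 := by
      rw [← Real.exp_zero]
      exact Real.exp_le_exp.mpr (by nlinarith)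
    have hlin : 1 - Real.exp (-θ * R0 s ω) ≤ θ * R0 s ω := by
      have := Real.add_one_le_exp (-θ * R0 s ω); linarith
    rw [abs_div, abs_of_pos hs, abs_sub_comm, abs_of_nonneg (by linarith), div_le_iff₀ hs]
    have h2 : θ * R0 s ω ≤ θ * (s * M / Real.log 2) := by nlinarith
    have h3 : θ * (s * M / Real.log 2) = θ * M / Real.log 2 * s := by ring
    linarith
  -- pointwise limit of difference quotients
  have hptlim : ∀ ω, Tendsto (fun s : ℝ => (Real.exp (-θ * R0 s ω) - 1) / s) l
      (𝓝 (-θ * g ω)) := by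
    intro ω
    have key : ∀ (δ z : ℝ),
        (∀ s, R0 s ω = Real.logb 2 (1 + (1 - δ) * s * z / (1 + δ * s * z))) →
        Tendsto (fun s : ℝ => (Real.exp (-θ * R0 s ω) - 1) / s) l
          (𝓝 (-θ * ((1 - δ) * z) / Real.log 2)) := by
      intro δ z hz
      have hd := aux_hasDerivAt θ δ z
      have hsl := hasDerivAt_iff_tendsto_slope.mp hd
      have hsl2 : Tendsto (slope (fun s : ℝ =>
          Real.exp (-θ * Real.logb 2 (1 + (1 - δ) * s * z / (1 + δ * s * z)))) 0) l
          (𝓝 (-θ * ((1 - δ) * z) / Real.log 2)) :=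
        hsl.mono_left (nhdsWithin_mono 0 (fun x hx => ne_of_gt hx))
      refine hsl2.congr fun s => ?_
      rw [slope_def_field, hz s]
      norm_num
    by_cases h : z2 ω ≤ z1 ω
    · have hzz : ∀ s, R0 s ω =
          Real.logb 2 (1 + (1 - δ1) * s * z2 ω / (1 + δ1 * s * z2 ω)) := by
        intro s; rw [hR0]; simp [h, not_lt.mpr h]
      have hgval : -θ * g ω = -θ * ((1 - δ1) * z2 ω) / Real.log 2 := by
        rw [hgdef]; simp only [if_pos h]; ring
      rw [hgval]
      exact key δ1 (z2 ω) hzz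
    · have hzz : ∀ s, R0 s ω =
          Real.logb 2 (1 + (1 - δ2) * s * z1 ω / (1 + δ2 * s * z1 ω)) := by
        intro s; rw [hR0]; simp [h, not_le.mp h]
      have hgval : -θ * g ω = -θ * ((1 - δ2) * z1 ω) / Real.log 2 := by
        rw [hgdef]; simp only [if_neg h]; ring
      rw [hgval]
      exact key δ2 (z1 ω) hzz
  -- dominated convergence
  have hDCT : Tendsto (fun s => ∫ ω, (Real.exp (-θ * R0 s ω) - 1) / s ∂μ) l
      (𝓝 (∫ ω, -θ * g ω ∂μ)) := by
    refine tendsto_integral_filter_of_dominated_convergence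
      (fun _ => θ * M / Real.log 2) ?_ ?_ (integrable_const _) ?_
    · exact Eventually.of_forall fun s =>
        ((((hR0m s).const_mul (-θ)).exp.sub measurable_const).div_const s).aestronglyMeasurable
    · filter_upwards [hspos] with s hs
      exact ae_of_all μ fun ω => by simpa [Real.norm_eq_abs, abs_div] using hbd s hs ω
    · exact ae_of_all μ fun ω => hptlim ω
  -- integral of g
  have hi1int : Integrable (fun ω => if z2 ω ≤ z1 ω then z2 ω else 0) μ := by
    refine int_of_bdd _ M (Measurable.ite (measurableSet_le hz2m hz1m) hz2m measurable_const)
      fun ω => ?_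
    by_cases h : z2 ω ≤ z1 ω
    · rw [if_pos h, abs_of_nonneg (hz2nn ω)]; exact hz2b ω
    · rw [if_neg h]; simpa using (hz2nn ω).trans (hz2b ω)
  have hi2int : Integrable (fun ω => if z1 ω < z2 ω then z1 ω else 0) μ := by
    refine int_of_bdd _ M (Measurable.ite (measurableSet_lt hz1m hz2m) hz1m measurable_const)
      fun ω => ?_
    by_cases h : z1 ω < z2 ω
    · rw [if_pos h, abs_of_nonneg (hz1nn ω)]; exact hz1b ω
    · rw [if_neg h]; simpa using (hz1nn ω).trans (hz1b ω)
  have hgeq : g = fun ω => ((1 - δ1) * (if z2 ω ≤ z1 ω then z2 ω else 0)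
      + (1 - δ2) * (if z1 ω < z2 ω then z1 ω else 0)) / Real.log 2 := by
    funext ω
    rw [hgdef]
    by_cases h : z2 ω ≤ z1 ω
    · simp [h, not_lt.mpr h]
    · simp [h, not_le.mp h]
  have hgint_val : ∫ ω, g ω ∂μ = D / Real.log 2 := by
    rw [hgeq, integral_div]
    congr 1
    rw [integral_add (hi1int.const_mul _) (hi2int.const_mul _),
      integral_const_mul, integral_const_mul]
  have hlimval : (∫ ω, -θ * g ω ∂μ) = -θ * (D / Real.log 2) := by
    rw [integral_const_mul, hgint_val]
  -- limit of (Fn s - 1)/s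
  have hG : Tendsto (fun s => (Fn s - 1) / s) l (𝓝 (-θ * (D / Real.log 2))) := by
    rw [hlimval] at hDCT
    refine hDCT.congr' ?_
    filter_upwards [hspos] with s hs
    have hint : Integrable (fun ω => Real.exp (-θ * R0 s ω)) μ := by
      refine int_of_bdd _ 1 (((hR0m s).const_mul (-θ)).exp) fun ω => ?_
      have h0 := (hR0bd s hs ω).1
      rw [abs_of_pos (Real.exp_pos _), ← Real.exp_zero]
      exact Real.exp_le_exp.mpr (by nlinarith)
    rw [integral_div, integral_sub hint (integrable_const 1), integral_const]
    simp [hFndef, measure_univ]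
  have hL : -θ * (D / Real.log 2) < 0 := by
    have : 0 < D / Real.log 2 := div_pos hden hlog2
    nlinarith
  have hF1 : Tendsto Fn l (𝓝 1) := by
    have h0 : Tendsto (fun s : ℝ => s) l (𝓝 0) :=
      (continuous_id.tendsto 0).mono_left nhdsWithin_le_nhds
    have hmul := hG.mul h0
    have h2 : Tendsto (fun s => Fn s - 1) l (𝓝 0) := by
      refine (by simpa using hmul : Tendsto (fun s => (Fn s - 1) / s * s) l (𝓝 0)).congr' ?_
      filter_upwards [hspos] with s hs
      rw [div_mul_cancel₀ _ (ne_of_gt hs)]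
    have h3 := h2.add_const 1
    simpa using h3
  have hFlt : ∀ᶠ s in l, Fn s - 1 < 0 := by
    have hev : ∀ᶠ s in l, (Fn s - 1) / s < 0 := hG.eventually_lt_const hL
    filter_upwards [hev, hspos] with s h1 h2
    have h3 := mul_neg_of_neg_of_pos h1 h2
    rwa [div_mul_cancel₀ _ (ne_of_gt h2)] at h3
  have hFne : Tendsto Fn l (𝓝[≠] (1:ℝ)) := by
    rw [tendsto_nhdsWithin_iff]
    refine ⟨hF1, hFlt.mono fun s hs => ?_⟩
    simp only [Set.mem_compl_iff, Set.mem_singleton_iff]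
    intro hcon
    rw [hcon] at hs
    norm_num at hs
  have hslope : Tendsto (fun s => Real.log (Fn s) / (Fn s - 1)) l (𝓝 1) := by
    have hd : Tendsto (slope Real.log 1) (𝓝[≠] (1:ℝ)) (𝓝 1) := by
      have := hasDerivAt_iff_tendsto_slope.mp (Real.hasDerivAt_log one_ne_zero)
      simpa using this
    refine (hd.comp hFne).congr fun s => ?_
    simp [slope_def_field, Real.log_one]
  have hlogF : Tendsto (fun s => Real.log (Fn s) / s) l (𝓝 (-θ * (D / Real.log 2))) := by
    have hmul := hslope.mul hG
    refine (by simpa using hmul :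
      Tendsto (fun s => Real.log (Fn s) / (Fn s - 1) * ((Fn s - 1) / s)) l
        (𝓝 (-θ * (D / Real.log 2)))).congr' ?_
    filter_upwards [hFlt, hspos] with s h1 h2
    have hne : Fn s - 1 ≠ 0 := ne_of_lt h1
    field_simp
  have hCE : Tendsto (fun s => CE0 s / s) l (𝓝 (D / Real.log 2)) := by
    have hmul := hlogF.const_mul (-(1/θ))
    have heq : -(1/θ) * (-θ * (D / Real.log 2)) = D / Real.log 2 := by
      field_simp
    rw [heq] at hmul
    refine hmul.congr fun s => ?_
    rw [hCE0 s]
    simp only [hFndef]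
    rw [mul_div_assoc]
  have hKne : D / Real.log 2 ≠ 0 := ne_of_gt (div_pos hden hlog2)
  have hfin := ((tendsto_const_nhds : Tendsto (fun _ : ℝ => c) l (𝓝 c))).div hCE hKne
  have hval : c / (D / Real.log 2) = c * Real.log 2 / D := div_div_eq_mul_div c D (Real.log 2)
  rw [hval] at hfin
  refine hfin.congr fun s => ?_
  exact div_div_eq_mul_div c (CE0 s) s
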